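/- Let v* ∈ R^d, and suppose a sequence v_t = v* + ζ_{v,t} satisfies ⟨v*, ζ_{v,t}⟩ = 0 and ‖v_T‖ ≤ min_{t ∈ [T]} ‖m_t‖ where m_t = v* + ζ_t, ⟨v*, ζ_t⟩ = 0, and the norms ‖ζ_t‖ are i.i.d. with density f(x) = (√2/(σ√π)) e^{-x²/(2σ²)} on [0,∞) for some σ > 0. Then E‖v_T - v*‖ ≤ σ√(2π)/T. -/

import Mathlib

open RealInnerProductSpace MeasureTheory ProbabilityTheory Set

private lemma aux_meas_inf' {Ω : Type*} [MeasurableSpace Ω] (X : ℕ → Ω → ℝ)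
    (hX : ∀ t, Measurable (X t)) :
    ∀ (S : Finset ℕ) (hS : S.Nonempty), Measurable (fun ω => S.inf' hS fun t => X t ω) := by
  intro S
  induction S using Finset.cons_induction with
  | empty => intro h; simp at h
  | cons a s ha ih =>
    intro _
    rcases s.eq_empty_or_nonempty with rfl | hs
    · simpa using hX a
    · simp only [Finset.inf'_cons (H := hs)]
      exact (hX a).inf (ih hs)



private lemma aux_integral_exp_neg_mul_Ioi' {k : ℝ} (a : ℝ) (hk : 0 < k) :
    ∫ x in Ioi a, Real.exp (-(k * x)) = Real.exp (-(k * a)) / k := by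
  have h := integral_comp_mul_left_Ioi (fun x => Real.exp (-x)) a hk
  simp only [smul_eq_mul] at h
  rw [h, integral_exp_neg_Ioi]
  ring

private lemma aux_intOn_exp' {k : ℝ} (a : ℝ) (hk : 0 < k) :
    IntegrableOn (fun x => Real.exp (-(k * x))) (Ioi a) := by
  simpa [neg_mul] using exp_neg_integrableOn_Ioi a hk

private lemma aux_intOn_gauss' {σ : ℝ} (hσ : 0 < σ) (s : Set ℝ) :
    IntegrableOn (fun x => Real.exp (-x ^ 2 / (2 * σ ^ 2))) s := by
  have hb : (0:ℝ) < 1 / (2 * σ ^ 2) := by positivity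
  have h : ∀ x : ℝ, -x ^ 2 / (2 * σ ^ 2) = -(1 / (2 * σ ^ 2)) * x ^ 2 := fun x => by ring
  simp_rw [h]
  exact (integrable_exp_neg_mul_sq hb).integrableOn

private lemma aux_gauss_total' {σ : ℝ} (hσ : 0 < σ) :
    ∫ x in Ioi (0:ℝ), Real.sqrt 2 / (σ * Real.sqrt Real.pi) * Real.exp (-x ^ 2 / (2 * σ ^ 2)) = 1 := by
  have hb : (0:ℝ) < 1 / (2 * σ ^ 2) := by positivity
  have h : ∀ x : ℝ, -x ^ 2 / (2 * σ ^ 2) = -(1 / (2 * σ ^ 2)) * x ^ 2 := fun x => by ring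
  simp_rw [h]
  rw [MeasureTheory.integral_const_mul, integral_gaussian_Ioi]
  have h1 : Real.pi / (1 / (2 * σ ^ 2)) = 2 * σ ^ 2 * Real.pi := by field_simp
  rw [h1]
  have h2 : Real.sqrt (2 * σ ^ 2 * Real.pi) = Real.sqrt 2 * σ * Real.sqrt Real.pi := by
    rw [Real.sqrt_mul (by positivity), Real.sqrt_mul (by norm_num), Real.sqrt_sq hσ.le]
  rw [h2]
  have hs2 : Real.sqrt 2 * Real.sqrt 2 = 2 := Real.mul_self_sqrt (by norm_num)
  have hsπ : Real.sqrt Real.pi ≠ 0 := by positivity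
  field_simp
  nlinarith [hs2, Real.sqrt_pos.mpr Real.pi_pos, mul_pos (Real.sqrt_pos.mpr Real.pi_pos) hσ]

private lemma aux_tail_bound' {σ : ℝ} (hσ : 0 < σ) {s : ℝ} (hs : 0 ≤ s) :
    ∫ x in Ioi s, Real.sqrt 2 / (σ * Real.sqrt Real.pi) * Real.exp (-x ^ 2 / (2 * σ ^ 2))
      ≤ Real.exp (-(Real.sqrt 2 / (σ * Real.sqrt Real.pi) * s)) := by
  set c : ℝ := Real.sqrt 2 / (σ * Real.sqrt Real.pi) with hc_def
  have hc : 0 < c := by positivity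
  have hInt_g : ∀ a : ℝ, IntegrableOn (fun x => c * Real.exp (-x ^ 2 / (2 * σ ^ 2))) (Ioi a) :=
    fun a => (aux_intOn_gauss' hσ (Ioi a)).const_mul c
  have hInt_g' : ∀ a : ℝ, IntegrableOn (fun x => c * Real.exp (-x ^ 2 / (2 * σ ^ 2))) (Ioc 0 a) :=
    fun a => (aux_intOn_gauss' hσ (Ioc 0 a)).const_mul c
  have hInt_e : ∀ a : ℝ, IntegrableOn (fun x => c * Real.exp (-(c * x))) (Ioi a) :=
    fun a => (aux_intOn_exp' a hc).const_mul c
  have hInt_e' : ∀ a : ℝ, IntegrableOn (fun x => c * Real.exp (-(c * x))) (Ioc 0 a) :=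
    fun a => IntegrableOn.mono_set ((aux_intOn_exp' 0 hc).const_mul c) Ioc_subset_Ioi_self
  have hee : ∀ a : ℝ, ∫ x in Ioi a, c * Real.exp (-(c * x)) = Real.exp (-(c * a)) := by
    intro a
    rw [MeasureTheory.integral_const_mul, aux_integral_exp_neg_mul_Ioi' a hc]
    field_simp
  rcases le_or_gt (c * (2 * σ ^ 2)) s with hcase | hcase
  · -- on Ioi s, gauss density ≤ exp density
    have hmono : ∀ x ∈ Ioi s, c * Real.exp (-x ^ 2 / (2 * σ ^ 2)) ≤ c * Real.exp (-(c * x)) := by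
      intro x hx
      have hx' : s < x := hx
      have hxpos : 0 < x := lt_of_le_of_lt (le_trans (by positivity) hcase) hx'
      apply mul_le_mul_of_nonneg_left _ hc.le
      apply Real.exp_le_exp.mpr
      rw [div_le_iff₀ (by positivity : (0:ℝ) < 2 * σ ^ 2)]
      nlinarith
    calc ∫ x in Ioi s, c * Real.exp (-x ^ 2 / (2 * σ ^ 2))
        ≤ ∫ x in Ioi s, c * Real.exp (-(c * x)) :=
          setIntegral_mono_on (hInt_g s) (hInt_e s) measurableSet_Ioi hmono
      _ = Real.exp (-(c * s)) := hee s
  · -- split at s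
    have husplit : Ioc 0 s ∪ Ioi s = Ioi (0:ℝ) := Ioc_union_Ioi_eq_Ioi hs
    have hdisj : Disjoint (Ioc (0:ℝ) s) (Ioi s) := Ioc_disjoint_Ioi le_rfl
    have hsplit_g : (∫ x in Ioc 0 s, c * Real.exp (-x ^ 2 / (2 * σ ^ 2)))
        + (∫ x in Ioi s, c * Real.exp (-x ^ 2 / (2 * σ ^ 2))) = 1 := by
      rw [← setIntegral_union hdisj measurableSet_Ioi (hInt_g' s) (hInt_g s), husplit]
      exact aux_gauss_total' hσ
    have hsplit_e : (∫ x in Ioc 0 s, c * Real.exp (-(c * x)))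
        + (∫ x in Ioi s, c * Real.exp (-(c * x))) = 1 := by
      rw [← setIntegral_union hdisj measurableSet_Ioi (hInt_e' s) (hInt_e s), husplit, hee 0]
      simp
    have hmono : ∀ x ∈ Ioc 0 s, c * Real.exp (-(c * x)) ≤ c * Real.exp (-x ^ 2 / (2 * σ ^ 2)) := by
      intro x hx
      obtain ⟨hx0, hxs⟩ := hx
      apply mul_le_mul_of_nonneg_left _ hc.le
      apply Real.exp_le_exp.mpr
      rw [le_div_iff₀ (by positivity : (0:ℝ) < 2 * σ ^ 2)]
      nlinarith
    have h2 : (∫ x in Ioc 0 s, c * Real.exp (-(c * x)))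
        ≤ ∫ x in Ioc 0 s, c * Real.exp (-x ^ 2 / (2 * σ ^ 2)) :=
      setIntegral_mono_on (hInt_e' s) (hInt_g' s) measurableSet_Ioc hmono
    have := hee s
    linarith

theorem hidden_vector_convergence_rate {d : ℕ} {Ω : Type*} [MeasurableSpace Ω]
    (μ : Measure Ω) [IsProbabilityMeasure μ]
    (T : ℕ) (hT : 1 ≤ T) (σ : ℝ) (hσ : 0 < σ)
    (vstar : EuclideanSpace ℝ (Fin d))
    (ζ : ℕ → Ω → EuclideanSpace ℝ (Fin d))
    (vT : Ω → EuclideanSpace ℝ (Fin d))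
    (hmeas : ∀ t, Measurable (ζ t))
    (horthv : ∀ ω, ⟪vstar, vT ω - vstar⟫ = 0)
    (horthζ : ∀ t ω, ⟪vstar, ζ t ω⟫ = 0)
    (hmin : ∀ ω, ∀ t ∈ Finset.Icc 1 T, ‖vT ω‖ ≤ ‖vstar + ζ t ω‖)
    (hindep : iIndepFun (fun t ω => ‖ζ t ω‖) μ)
    (hdist : ∀ t, Measure.map (fun ω => ‖ζ t ω‖) μ =
        (volume.restrict (Set.Ici (0 : ℝ))).withDensity (fun x =>
          ENNReal.ofReal (Real.sqrt 2 / (σ * Real.sqrt Real.pi) *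
            Real.exp (-x ^ 2 / (2 * σ ^ 2))))) :
    ∫ ω, ‖vT ω - vstar‖ ∂μ ≤ σ * Real.sqrt (2 * Real.pi) / T := by
  have hTpos : (0:ℝ) < T := by exact_mod_cast hT
  have hbound_nn : 0 ≤ σ * Real.sqrt (2 * Real.pi) / T := by positivity
  set c : ℝ := Real.sqrt 2 / (σ * Real.sqrt Real.pi) with hc_def
  have hc : 0 < c := by positivity
  have hne : (Finset.Icc 1 T).Nonempty := ⟨1, by simp [hT]⟩
  set M : Ω → ℝ := fun ω => (Finset.Icc 1 T).inf' hne fun t => ‖ζ t ω‖ with hM_def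
  -- pointwise bound
  have hpt : ∀ ω, ‖vT ω - vstar‖ ≤ M ω := by
    intro ω
    apply Finset.le_inf'
    intro t ht
    have h1 : ‖vT ω‖ ^ 2 = ‖vstar‖ ^ 2 + ‖vT ω - vstar‖ ^ 2 := by
      have hv : vstar + (vT ω - vstar) = vT ω := by abel
      have hsq := norm_add_sq_real vstar (vT ω - vstar)
      rw [hv, horthv ω] at hsq
      rw [hsq]; ring
    have h2 : ‖vstar + ζ t ω‖ ^ 2 = ‖vstar‖ ^ 2 + ‖ζ t ω‖ ^ 2 := by
      rw [norm_add_sq_real, horthζ t ω]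
      ring
    have h3 : ‖vT ω‖ ^ 2 ≤ ‖vstar + ζ t ω‖ ^ 2 :=
      pow_le_pow_left₀ (norm_nonneg _) (hmin ω t ht) 2
    have h4 : ‖vT ω - vstar‖ ^ 2 ≤ ‖ζ t ω‖ ^ 2 := by linarith
    have := Real.sqrt_le_sqrt h4
    rwa [Real.sqrt_sq (norm_nonneg _), Real.sqrt_sq (norm_nonneg _)] at this
  have hM_nn : ∀ ω, 0 ≤ M ω := fun ω => (norm_nonneg _).trans (hpt ω)
  have hM_meas : Measurable M :=
    aux_meas_inf' _ (fun t => (hmeas t).norm) _ hne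
  -- key lintegral bound
  have hkey : ∫⁻ ω, ENNReal.ofReal (M ω) ∂μ ≤ ENNReal.ofReal (σ * Real.sqrt (2 * Real.pi) / T) := by
    rw [lintegral_eq_lintegral_meas_lt μ (Filter.Eventually.of_forall hM_nn) hM_meas.aemeasurable]
    have hstep : ∀ s ∈ Ioi (0:ℝ),
        μ {ω | s < M ω} ≤ ENNReal.ofReal (Real.exp (-(c * T * s))) := by
      intro s hs
      have hs0 : (0:ℝ) ≤ s := le_of_lt hs
      have hsets : {ω | s < M ω} = ⋂ t ∈ Finset.Icc 1 T, (fun ω => ‖ζ t ω‖) ⁻¹' Ioi s := by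
        ext ω
        simp [hM_def, Finset.lt_inf'_iff]
      have hprod := hindep.meas_biInter (S := Finset.Icc 1 T)
        (s := fun t => (fun ω => ‖ζ t ω‖) ⁻¹' Ioi s)
        (fun t _ => ⟨Ioi s, measurableSet_Ioi, rfl⟩)
      have happ : ∀ t ∈ Finset.Icc 1 T,
          μ ((fun ω => ‖ζ t ω‖) ⁻¹' Ioi s)
            = ENNReal.ofReal (∫ x in Ioi s, c * Real.exp (-x ^ 2 / (2 * σ ^ 2))) := by
        intro t _
        have := Measure.map_apply (μ := μ) (f := fun ω => ‖ζ t ω‖) ((hmeas t).norm) (measurableSet_Ioi (a := s))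
        have hss : Ioi s ∩ Ici (0:ℝ) = Ioi s :=
          inter_eq_self_of_subset_left fun x hx => le_trans hs0 (le_of_lt hx)
        rw [← this, hdist t, withDensity_apply _ measurableSet_Ioi,
          Measure.restrict_restrict measurableSet_Ioi, hss,
          ← ofReal_integral_eq_lintegral_ofReal
            ((aux_intOn_gauss' hσ (Ioi s)).const_mul c)
            (Filter.Eventually.of_forall fun x => by positivity)]
      have hcard : (Finset.Icc 1 T).card = T := by
        rw [Nat.card_Icc]; omega
      rw [hsets, hprod, Finset.prod_congr rfl happ, Finset.prod_const, hcard]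
      calc (ENNReal.ofReal (∫ x in Ioi s, c * Real.exp (-x ^ 2 / (2 * σ ^ 2)))) ^ T
          ≤ (ENNReal.ofReal (Real.exp (-(c * s)))) ^ T := by
            gcongr
            exact aux_tail_bound' hσ hs0
        _ = ENNReal.ofReal (Real.exp (-(c * T * s))) := by
            rw [← ENNReal.ofReal_pow (Real.exp_nonneg _), ← Real.exp_nat_mul]
            ring_nf
    calc ∫⁻ s in Ioi 0, μ {ω | s < M ω}
        ≤ ∫⁻ s in Ioi 0, ENNReal.ofReal (Real.exp (-(c * T * s))) :=
          setLIntegral_mono ((Real.measurable_exp.comp ((measurable_id.const_mul (c * T)).neg)).ennreal_ofReal) hstep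
      _ = ENNReal.ofReal (∫ s in Ioi 0, Real.exp (-(c * T * s))) :=
          (ofReal_integral_eq_lintegral_ofReal (aux_intOn_exp' 0 (by positivity))
            (Filter.Eventually.of_forall fun x => (Real.exp_nonneg _))).symm
      _ ≤ ENNReal.ofReal (σ * Real.sqrt (2 * Real.pi) / T) := by
          apply ENNReal.ofReal_le_ofReal
          rw [aux_integral_exp_neg_mul_Ioi' 0 (by positivity : (0:ℝ) < c * T)]
          simp only [mul_zero, neg_zero, Real.exp_zero]
          rw [Real.sqrt_mul (by norm_num : (0:ℝ) ≤ 2)]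
          rw [div_le_div_iff₀ (by positivity) hTpos]
          have hs2 : Real.sqrt 2 * Real.sqrt 2 = 2 := Real.mul_self_sqrt (by norm_num)
          have hsπ : (0:ℝ) < Real.sqrt Real.pi := Real.sqrt_pos.mpr Real.pi_pos
          rw [hc_def]
          field_simp
          nlinarith [hs2, hsπ, hσ, hTpos, mul_pos (mul_pos hσ hsπ) hTpos]
  -- conclude
  by_cases hInt : Integrable (fun ω => ‖vT ω - vstar‖) μ
  · rw [integral_eq_lintegral_of_nonneg_ae (Filter.Eventually.of_forall fun ω => norm_nonneg _)
      hInt.aestronglyMeasurable]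
    apply ENNReal.toReal_le_of_le_ofReal hbound_nn
    exact le_trans (lintegral_mono fun ω => ENNReal.ofReal_le_ofReal (hpt ω)) hkey
  · rw [integral_undef hInt]
    exact hbound_nn
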